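/- For every integer m ≥ 1 and every real σ > 0, G_σ(m)/S(m,σ) ≤ (1/(2m−1)) · e^{−(2m−1)/(2σ²)} ≤ 1/(2m−1). In particular, the constant B_1(m,σ) := 1 + G_σ(m)/S(m,σ) satisfies 1 ≤ B_1(m,σ) ≤ 1 + 1/(2m−1) ≤ 2, uniformly in σ. -/

import Mathlib

/-- Gaussian density with standard deviation `σ`. -/
noncomputable def G (σ z : ℝ) : ℝ :=
  Real.exp (-z ^ 2 / (2 * σ ^ 2)) / (Real.sqrt (2 * Real.pi) * σ)

/-- Normalization constant `S(m,σ) = ∑_{k=1-m}^{m-1} G_σ(k)`. -/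
noncomputable def S (m : ℕ) (σ : ℝ) : ℝ :=
  ∑ k ∈ Finset.Icc (1 - (m : ℤ)) ((m : ℤ) - 1), G σ (k : ℝ)

lemma sqrt2pi_pos : 0 < Real.sqrt (2 * Real.pi) :=
  Real.sqrt_pos.mpr (by positivity)

lemma G_pos (σ : ℝ) (hσ : 0 < σ) (z : ℝ) : 0 < G σ z := by
  unfold G
  have := sqrt2pi_pos
  positivity

lemma G_anti (σ : ℝ) (hσ : 0 < σ) {z w : ℝ} (h : z ^ 2 ≤ w ^ 2) : G σ w ≤ G σ z := by
  unfold G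
  have h2π := sqrt2pi_pos
  gcongr


lemma S_lower (m : ℕ) (hm : 1 ≤ m) (σ : ℝ) (hσ : 0 < σ) :
    (2 * (m : ℝ) - 1) * G σ ((m : ℝ) - 1) ≤ S m σ := by
  have hcard : (Finset.Icc (1 - (m : ℤ)) ((m : ℤ) - 1)).card = 2 * m - 1 := by
    rw [Int.card_Icc]
    omega
  have hterm : ∀ k ∈ Finset.Icc (1 - (m : ℤ)) ((m : ℤ) - 1),
      G σ ((m : ℝ) - 1) ≤ G σ (k : ℝ) := by
    intro k hk
    simp only [Finset.mem_Icc] at hk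
    apply G_anti σ hσ
    have h1 : |(k : ℝ)| ≤ (m : ℝ) - 1 := by
      rw [abs_le]
      constructor
      · have : (1 - (m : ℤ) : ℝ) ≤ (k : ℝ) := by exact_mod_cast hk.1
        push_cast at this ⊢; linarith
      · have : ((k : ℤ) : ℝ) ≤ ((m : ℤ) - 1 : ℝ) := by exact_mod_cast hk.2
        push_cast at this ⊢; linarith
    have h0 : 0 ≤ (m : ℝ) - 1 := by
      have : (1:ℝ) ≤ m := by exact_mod_cast hm
      linarith
    calc (k:ℝ)^2 = |(k:ℝ)|^2 := (sq_abs _).symm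
      _ ≤ ((m:ℝ) - 1)^2 := by apply pow_le_pow_left₀ (abs_nonneg _) h1
  calc (2 * (m : ℝ) - 1) * G σ ((m : ℝ) - 1)
      = (Finset.Icc (1 - (m : ℤ)) ((m : ℤ) - 1)).card • G σ ((m : ℝ) - 1) := by
        rw [hcard, nsmul_eq_mul]
        congr 1
        push_cast [Nat.cast_sub (by omega : 1 ≤ 2 * m)]
        ring
    _ ≤ S m σ := Finset.card_nsmul_le_sum _ _ _ hterm

lemma G_ratio (m : ℕ) (σ : ℝ) (hσ : 0 < σ) :
    G σ (m : ℝ) = Real.exp (-(2 * (m : ℝ) - 1) / (2 * σ ^ 2)) * G σ ((m : ℝ) - 1) := by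
  unfold G
  have h : (-(m:ℝ)^2 / (2*σ^2)) = (-(2*(m:ℝ)-1)/(2*σ^2)) + (-((m:ℝ)-1)^2/(2*σ^2)) := by
    field_simp
    ring
  rw [h, Real.exp_add, mul_div_assoc]

/-- `G_σ(m)/S(m,σ) ≤ (1/(2m-1)) e^{-(2m-1)/(2σ²)} ≤ 1/(2m-1)`, and hence
`B₁(m,σ) = 1 + G_σ(m)/S(m,σ)` satisfies `1 ≤ B₁ ≤ 1 + 1/(2m-1) ≤ 2`, uniformly in `σ`. -/
theorem B1_bounds (m : ℕ) (hm : 1 ≤ m) (σ : ℝ) (hσ : 0 < σ) :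
    G σ m / S m σ ≤ (1 / (2 * (m : ℝ) - 1)) * Real.exp (-(2 * (m : ℝ) - 1) / (2 * σ ^ 2)) ∧
    (1 / (2 * (m : ℝ) - 1)) * Real.exp (-(2 * (m : ℝ) - 1) / (2 * σ ^ 2)) ≤ 1 / (2 * (m : ℝ) - 1) ∧
    1 ≤ 1 + G σ m / S m σ ∧
    1 + G σ m / S m σ ≤ 1 + 1 / (2 * (m : ℝ) - 1) ∧
    1 + 1 / (2 * (m : ℝ) - 1) ≤ 2 := by
  have hm1 : (1:ℝ) ≤ m := by exact_mod_cast hm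
  have h2m : (0:ℝ) < 2 * (m : ℝ) - 1 := by linarith
  have hGm1 : 0 < G σ ((m : ℝ) - 1) := G_pos σ hσ _
  have hS : 0 < S m σ := lt_of_lt_of_le (by positivity) (S_lower m hm σ hσ)
  have hGm : 0 < G σ (m : ℝ) := G_pos σ hσ _
  have hexp : Real.exp (-(2 * (m : ℝ) - 1) / (2 * σ ^ 2)) ≤ 1 := by
    apply Real.exp_le_one_iff.mpr
    apply div_nonpos_of_nonpos_of_nonneg
    · linarith
    · positivity
  have h1 : G σ m / S m σ ≤
      (1 / (2 * (m : ℝ) - 1)) * Real.exp (-(2 * (m : ℝ) - 1) / (2 * σ ^ 2)) := by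
    have hle : G σ m / S m σ ≤ G σ m / ((2 * (m : ℝ) - 1) * G σ ((m : ℝ) - 1)) := by
      apply div_le_div_of_nonneg_left hGm.le (by positivity) (S_lower m hm σ hσ)
    refine hle.trans_eq ?_
    rw [G_ratio m σ hσ]
    field_simp
  have h2 : (1 / (2 * (m : ℝ) - 1)) * Real.exp (-(2 * (m : ℝ) - 1) / (2 * σ ^ 2)) ≤
      1 / (2 * (m : ℝ) - 1) := by
    nlinarith [Real.exp_pos (-(2 * (m : ℝ) - 1) / (2 * σ ^ 2)), one_div_pos.mpr h2m]
  have hfrac : 1 / (2 * (m : ℝ) - 1) ≤ 1 := by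
    rw [div_le_one h2m]; linarith
  have hGS : 0 ≤ G σ m / S m σ := by positivity
  refine ⟨h1, h2, by linarith, by linarith [h1.trans h2], by linarith⟩
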